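/- Define J on sl(2n+1,ℝ) by J(A,v,w) = (AJ₀, -J₀v, -J₀w) where J₀ = [[0,-I_n],[I_n,0]], using the decomposition sl(2n+1,ℝ) = gl(2n,ℝ) ⊕ a ⊕ b. Then J² = -Id and the Nijenhuis tensor of J vanishes, i.e., J[x,y] = [Jx,y] + [x,Jy] + J[Jx,Jy] for all x,y ∈ sl(2n+1,ℝ). -/

import Mathlib

open Matrix

namespace Stmt8

/-- The identification of `gl(m,ℝ) ⊕ a ⊕ b` with matrices in `sl(m+1,ℝ)`:
`(A, v, w) ↦ [[A, w], [vᵗ, -tr A]]`. -/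
def Phi {ι : Type} [Fintype ι] (A : Matrix ι ι ℝ) (v w : ι → ℝ) :
    Matrix (ι ⊕ Unit) (ι ⊕ Unit) ℝ :=
  Matrix.fromBlocks A (Matrix.of fun i (_ : Unit) => w i)
    (Matrix.of fun (_ : Unit) j => v j) (Matrix.of fun _ _ => -A.trace)

/-- The standard complex structure `J₀ = [[0,-Iₙ],[Iₙ,0]]` on `ℝ^{2n}`. -/
def J0 (n : ℕ) : Matrix (Fin n ⊕ Fin n) (Fin n ⊕ Fin n) ℝ :=
  Matrix.fromBlocks 0 (-1) 1 0

section aux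

set_option linter.unusedSectionVars false

variable {ι : Type} [Fintype ι] {n : ℕ}

lemma trace_vecMulVec (w v : ι → ℝ) : (vecMulVec w v).trace = dotProduct w v := by
  rw [vecMulVec_eq Unit, trace_replicateCol_mul_replicateRow]

lemma Phi_add (A A' : Matrix ι ι ℝ) (v w v' w' : ι → ℝ) :
    Phi A v w + Phi A' v' w' = Phi (A + A') (v + v') (w + w') := by
  ext (i | i) (j | j) <;> simp [Phi, fromBlocks] <;> ring

lemma Phi_neg (A : Matrix ι ι ℝ) (v w : ι → ℝ) :
    Phi (-A) (-v) (-w) = -Phi A v w := by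
  ext (i | i) (j | j) <;> simp [Phi, fromBlocks]

lemma Phi_congr {A A' : Matrix ι ι ℝ} {v w v' w' : ι → ℝ}
    (h1 : A = A') (h2 : v = v') (h3 : w = w') : Phi A v w = Phi A' v' w' := by
  rw [h1, h2, h3]

lemma lie_Phi (A A' : Matrix ι ι ℝ) (v w v' w' : ι → ℝ) :
    ⁅Phi A v w, Phi A' v' w'⁆ =
      Phi (A * A' - A' * A + vecMulVec w v' - vecMulVec w' v)
        (A'ᵀ *ᵥ v - Aᵀ *ᵥ v' + A'.trace • v - A.trace • v')
        (A *ᵥ w' - A' *ᵥ w + A.trace • w' - A'.trace • w) := by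
  have htr : (A * A' - A' * A + vecMulVec w v' - vecMulVec w' v).trace
      = dotProduct w v' - dotProduct w' v := by
    simp [trace_vecMulVec, trace_mul_comm A A']
  rw [Ring.lie_def]
  ext (i | i) (j | j) <;>
    simp [Phi, fromBlocks, mul_apply, htr, Matrix.mulVec, dotProduct,
      vecMulVec_apply, Fintype.sum_sum_type, mul_comm] <;> ring

lemma vecMulVec_mulVec_left (M : Matrix ι ι ℝ) (w v : ι → ℝ) :
    vecMulVec (M *ᵥ w) v = M * vecMulVec w v := by
  ext i j
  simp [vecMulVec_apply, mul_apply, Matrix.mulVec, dotProduct, Finset.sum_mul, mul_assoc]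

lemma vecMulVec_mulVec_right (M : Matrix ι ι ℝ) (w v : ι → ℝ) :
    vecMulVec w (M *ᵥ v) = vecMulVec w v * Mᵀ := by
  ext i j
  simp [vecMulVec_apply, mul_apply, Matrix.mulVec, dotProduct, Finset.mul_sum, mul_comm,
    mul_left_comm]

lemma vecMulVec_neg_left (w v : ι → ℝ) : vecMulVec (-w) v = -vecMulVec w v := by
  ext i j; simp [vecMulVec_apply]

lemma vecMulVec_neg_right (w v : ι → ℝ) : vecMulVec w (-v) = -vecMulVec w v := by
  ext i j; simp [vecMulVec_apply]

lemma J0T : (J0 n)ᵀ = -(J0 n) := by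
  ext (i | i) (j | j) <;> simp [J0, fromBlocks, one_apply, eq_comm]

lemma J0_sq : J0 n * J0 n = -1 := by
  ext (i | i) (j | j) <;>
    simp [J0, fromBlocks, mul_apply, Fintype.sum_sum_type, one_apply, Finset.sum_ite_eq',
      eq_comm]

lemma J0_sq' (B : Matrix (Fin n ⊕ Fin n) (Fin n ⊕ Fin n) ℝ) :
    J0 n * (J0 n * B) = -B := by rw [← mul_assoc, J0_sq]; simp

end aux

set_option maxHeartbeats 1000000 in
/-- The map `J(A,v,w) = (AJ₀, -J₀v, -J₀w)` on
`sl(2n+1,ℝ) = gl(2n,ℝ) ⊕ a ⊕ b` satisfies `J² = -Id`, and its Nijenhuis tensor vanishes: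
`J[x,y] = [Jx,y] + [x,Jy] + J[Jx,Jy]` for all `x, y ∈ sl(2n+1,ℝ)`. -/
theorem stmt8 (n : ℕ)
    (J : Matrix ((Fin n ⊕ Fin n) ⊕ Unit) ((Fin n ⊕ Fin n) ⊕ Unit) ℝ →ₗ[ℝ]
      Matrix ((Fin n ⊕ Fin n) ⊕ Unit) ((Fin n ⊕ Fin n) ⊕ Unit) ℝ)
    (hJ : ∀ (A : Matrix (Fin n ⊕ Fin n) (Fin n ⊕ Fin n) ℝ) (v w : Fin n ⊕ Fin n → ℝ),
      J (Phi A v w) = Phi (A * J0 n) (-(J0 n *ᵥ v)) (-(J0 n *ᵥ w))) :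
    (∀ (A : Matrix (Fin n ⊕ Fin n) (Fin n ⊕ Fin n) ℝ) (v w : Fin n ⊕ Fin n → ℝ),
      J (J (Phi A v w)) = -(Phi A v w)) ∧
    (∀ (A A' : Matrix (Fin n ⊕ Fin n) (Fin n ⊕ Fin n) ℝ)
        (v w v' w' : Fin n ⊕ Fin n → ℝ),
      J ⁅Phi A v w, Phi A' v' w'⁆ =
        ⁅J (Phi A v w), Phi A' v' w'⁆ + ⁅Phi A v w, J (Phi A' v' w')⁆ +
          J ⁅J (Phi A v w), J (Phi A' v' w')⁆) := by
  constructor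
  · intro A v w
    rw [hJ, hJ, mul_assoc, J0_sq, mul_neg_one, ← Phi_neg]
    refine Phi_congr rfl ?_ ?_ <;>
      simp [Matrix.mulVec_neg, Matrix.mulVec_mulVec, J0_sq, Matrix.neg_mulVec]
  · intro A A' v w v' w'
    simp only [hJ, lie_Phi, Phi_add]
    refine Phi_congr ?_ ?_ ?_
    · simp only [vecMulVec_neg_left, vecMulVec_neg_right, vecMulVec_mulVec_left,
        vecMulVec_mulVec_right, J0T, mul_neg, neg_mul, neg_neg, sub_mul, add_mul,
        mul_assoc, J0_sq, J0_sq', mul_neg_one, mul_one]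
      abel
    · simp only [transpose_mul, J0T, Matrix.mulVec_add, Matrix.mulVec_sub,
        Matrix.mulVec_neg, Matrix.mulVec_smul, Matrix.mulVec_mulVec, Matrix.neg_mulVec,
        mul_neg, neg_mul, neg_neg, mul_assoc, J0_sq, J0_sq', smul_neg, Matrix.one_mulVec,
        mul_neg_one, mul_one]
      module
    · simp only [transpose_mul, J0T, Matrix.mulVec_add, Matrix.mulVec_sub,
        Matrix.mulVec_neg, Matrix.mulVec_smul, Matrix.mulVec_mulVec, Matrix.neg_mulVec,
        mul_neg, neg_mul, neg_neg, mul_assoc, J0_sq, J0_sq', smul_neg, Matrix.one_mulVec,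
        mul_neg_one, mul_one]
      module

end Stmt8
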